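/- arXiv:1402.2663 — 2 statements merged into one kernel-verified Lean document; each statement's English description precedes it below -/
import Mathlib

section
/- For any connected graph G, the strong metric dimension of G equals the vertex cover number of its strong resolving graph: dim_s(G) = α(G_SR). -/
open SimpleGraph

namespace Paper

variable {α β : Type*}

/-- The lexicographic product of two simple graphs. -/
def lexProd (G : SimpleGraph α) (H : SimpleGraph β) : SimpleGraph (α × β) where
  Adj p q := G.Adj p.1 q.1 ∨ (p.1 = q.1 ∧ H.Adj p.2 q.2)
  symm := ⟨by
    rintro ⟨a, b⟩ ⟨c, d⟩ (h | ⟨h1, h2⟩)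
    · exact Or.inl h.symm
    · exact Or.inr ⟨h1.symm, h2.symm⟩⟩
  loopless := ⟨by
    rintro ⟨a, b⟩ (h | ⟨h1, h2⟩)
    · exact G.loopless.irrefl a h
    · exact H.loopless.irrefl b h2⟩

/-- `u` is maximally distant from `v`. -/
def MaxDistant (G : SimpleGraph α) (u v : α) : Prop :=
  ∀ w, G.Adj u w → G.edist v w ≤ G.edist u v

/-- `u` and `v` are mutually maximally distant. -/
def MMD (G : SimpleGraph α) (u v : α) : Prop :=
  MaxDistant G u v ∧ MaxDistant G v u

/-- Two vertices are true twins if they have the same closed neighborhood. -/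
def TrueTwins (G : SimpleGraph α) (u v : α) : Prop :=
  ∀ w, (G.Adj u w ∨ u = w) ↔ (G.Adj v w ∨ v = w)

/-- The boundary of a graph: vertices belonging to some mutually maximally distant pair. -/
def boundary (G : SimpleGraph α) : Set α := {u | ∃ v, u ≠ v ∧ MMD G u v}

/-- The strong resolving graph of `G`, with vertex set the boundary of `G`. -/
def srGraph (G : SimpleGraph α) : SimpleGraph (boundary G) where
  Adj u v := u.1 ≠ v.1 ∧ MMD G u.1 v.1
  symm := ⟨fun u v h => ⟨h.1.symm, h.2.2, h.2.1⟩⟩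
  loopless := ⟨fun u h => h.1 rfl⟩

/-- The graph `G*`: same vertices, `u ~ v` iff `d_G(u,v) ≥ 2` or `u,v` are true twins. -/
def gstar (G : SimpleGraph α) : SimpleGraph α where
  Adj u v := u ≠ v ∧ (2 ≤ G.edist u v ∨ TrueTwins G u v)
  symm := ⟨by
    rintro u v ⟨h1, (h2 | h2)⟩
    · exact ⟨h1.symm, Or.inl (by rwa [G.edist_comm] at h2)⟩
    · exact ⟨h1.symm, Or.inr fun w => (h2 w).symm⟩⟩
  loopless := ⟨fun u h => h.1 rfl⟩

/-- `G*` with its isolated vertices removed. -/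
def gstarMinus (G : SimpleGraph α) : SimpleGraph {x | ∃ y, (gstar G).Adj x y} :=
  SimpleGraph.induce _ (gstar G)

/-- Disjoint union of two graphs. -/
def disjUnion (G : SimpleGraph α) (H : SimpleGraph β) : SimpleGraph (α ⊕ β) where
  Adj x y := match x, y with
    | Sum.inl a, Sum.inl b => G.Adj a b
    | Sum.inr a, Sum.inr b => H.Adj a b
    | _, _ => False
  symm := ⟨by
    rintro (a | a) (b | b) h <;> simp_all <;> exact h.symm⟩
  loopless := ⟨by
    rintro (a | a) h <;> simp_all⟩

/-- `k` disjoint copies of a graph. -/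
def copies (k : ℕ) (G : SimpleGraph α) : SimpleGraph (Fin k × α) where
  Adj p q := p.1 = q.1 ∧ G.Adj p.2 q.2
  symm := ⟨fun p q h => ⟨h.1.symm, h.2.symm⟩⟩
  loopless := ⟨fun p h => G.loopless.irrefl _ h.2⟩

/-- The join `K₁ + H` of a single vertex with `H`. -/
def joinK1 (H : SimpleGraph β) : SimpleGraph (Unit ⊕ β) where
  Adj x y := match x, y with
    | Sum.inl _, Sum.inl _ => False
    | Sum.inl _, Sum.inr _ => True
    | Sum.inr _, Sum.inl _ => True
    | Sum.inr a, Sum.inr b => H.Adj a b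
  symm := ⟨by
    rintro (a | a) (b | b) h <;> simp_all <;> exact h.symm⟩
  loopless := ⟨by
    rintro (a | a) h <;> simp_all⟩

/-- `w` strongly resolves the pair `u, v`. -/
def StronglyResolves (G : SimpleGraph α) (w u v : α) : Prop :=
  G.edist w u = G.edist w v + G.edist v u ∨ G.edist w v = G.edist w u + G.edist u v

/-- A strong metric generator. -/
def IsStrongGenerator (G : SimpleGraph α) (S : Finset α) : Prop :=
  ∀ u v : α, u ≠ v → ∃ w ∈ S, StronglyResolves G w u v

/-- The strong metric dimension. -/
noncomputable def sdim (G : SimpleGraph α) : ℕ :=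
  sInf {k | ∃ S : Finset α, IsStrongGenerator G S ∧ S.card = k}

/-- A vertex cover. -/
def IsVertexCover (G : SimpleGraph α) (S : Finset α) : Prop :=
  ∀ ⦃u v : α⦄, G.Adj u v → u ∈ S ∨ v ∈ S

/-- The vertex cover number `α(G)`. -/
noncomputable def vcNum (G : SimpleGraph α) : ℕ :=
  sInf {k | ∃ S : Finset α, IsVertexCover G S ∧ S.card = k}

/-- The independence number `β(G)`. -/
noncomputable def indepNum (G : SimpleGraph α) : ℕ :=
  sSup {k | ∃ S : Finset α, (∀ u ∈ S, ∀ v ∈ S, ¬ G.Adj u v) ∧ S.card = k}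

section Aux

variable {G : SimpleGraph α}

lemma edist_cast (hG : G.Connected) (u v : α) : G.edist u v = (G.dist u v : ℕ∞) :=
  (ENat.coe_toNat (edist_ne_top_iff_reachable.mpr (hG u v))).symm

lemma maxDistant_iff (hG : G.Connected) {u v : α} :
    MaxDistant G u v ↔ ∀ w, G.Adj u w → G.dist v w ≤ G.dist u v := by
  unfold MaxDistant
  constructor
  · intro h w hw
    have := h w hw
    rw [edist_cast hG, edist_cast hG, Nat.cast_le] at this
    exact this
  · intro h w hw
    rw [edist_cast hG, edist_cast hG, Nat.cast_le]
    exact h w hw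

lemma stronglyResolves_of_dist (hG : G.Connected) {w u v : α}
    (h : G.dist w u = G.dist w v + G.dist v u ∨ G.dist w v = G.dist w u + G.dist u v) :
    StronglyResolves G w u v := by
  unfold StronglyResolves
  rw [edist_cast hG, edist_cast hG, edist_cast hG, edist_cast hG]
  rcases h with h | h
  · exact Or.inl (by exact_mod_cast congrArg (Nat.cast : ℕ → ℕ∞) h)
  · exact Or.inr (by exact_mod_cast congrArg (Nat.cast : ℕ → ℕ∞) h)

lemma stronglyResolves_dist (hG : G.Connected) {w u v : α}
    (h : StronglyResolves G w u v) :
    G.dist w u = G.dist w v + G.dist v u ∨ G.dist w v = G.dist w u + G.dist u v := by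
  unfold StronglyResolves at h
  rw [edist_cast hG, edist_cast hG, edist_cast hG, edist_cast hG] at h
  rcases h with h | h
  · exact Or.inl (by exact_mod_cast h)
  · exact Or.inr (by exact_mod_cast h)

/-- Key extension lemma: from any `u` we can walk away from `v` until we reach a vertex
maximally distant from `v`, keeping `u` on a geodesic. -/
lemma exists_maxDistant [Fintype α] (hG : G.Connected) (v u : α) :
    ∃ u', G.dist v u' = G.dist v u + G.dist u u' ∧ MaxDistant G u' v := by
  classical
  set S : Finset α := Finset.univ.filter (fun x => G.dist v x = G.dist v u + G.dist u x) with hS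
  have huS : u ∈ S := by simp [hS]
  obtain ⟨u', hu'S, hmax⟩ := S.exists_max_image (G.dist v) ⟨u, huS⟩
  have hu' : G.dist v u' = G.dist v u + G.dist u u' := by
    simpa [hS] using hu'S
  refine ⟨u', hu', ?_⟩
  rw [maxDistant_iff hG]
  intro w hw
  by_contra hcon
  push_neg at hcon
  rw [SimpleGraph.dist_comm (G := G) (u := u') (v := v)] at hcon
  have h1 : G.dist v w ≤ G.dist v u' + G.dist u' w := hG.dist_triangle
  have h2 : G.dist u' w = 1 := dist_eq_one_iff_adj.mpr hw
  have h3 : G.dist v w ≤ G.dist v u + G.dist u w := hG.dist_triangle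
  have h4 : G.dist u w ≤ G.dist u u' + G.dist u' w := hG.dist_triangle
  have hwS : w ∈ S := by
    simp only [hS, Finset.mem_filter, Finset.mem_univ, true_and]
    omega
  have := hmax w hwS
  omega

/-- Transfer lemma: being maximally distant is preserved along geodesic extensions. -/
lemma maxDistant_trans (hG : G.Connected) {u' v v' : α}
    (h : MaxDistant G u' v) (heq : G.dist u' v' = G.dist u' v + G.dist v v') :
    MaxDistant G u' v' := by
  rw [maxDistant_iff hG] at h ⊢
  intro w hw
  have h1 : G.dist v' w ≤ G.dist v' v + G.dist v w := hG.dist_triangle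
  have h2 := h w hw
  have h3 : G.dist v' v = G.dist v v' := SimpleGraph.dist_comm (G := G) (u := v') (v := v)
  have h4 : G.dist u' v' = G.dist v' u' := SimpleGraph.dist_comm (G := G) (u := u') (v := v')
  omega

/-- For any pair `u ≠ v` there is an MMD pair `u', v'` each of which strongly
resolves `u, v`. -/
lemma exists_mmd_resolver [Fintype α] (hG : G.Connected) {u v : α} (hne : u ≠ v) :
    ∃ u' v', u' ≠ v' ∧ MMD G u' v' ∧ StronglyResolves G u' u v ∧
      StronglyResolves G v' u v := by
  obtain ⟨u', hu'eq, hu'max⟩ := exists_maxDistant hG v u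
  obtain ⟨v', hv'eq, hv'max⟩ := exists_maxDistant hG u' v
  have hu'max' : MaxDistant G u' v' := maxDistant_trans hG hu'max hv'eq
  have hd0 : 0 < G.dist v u := hG.pos_dist_of_ne (Ne.symm hne)
  have hc1 : G.dist u' v = G.dist v u' := SimpleGraph.dist_comm (G := G) (u := u') (v := v)
  have hne' : u' ≠ v' := by
    intro h
    subst h
    have : G.dist u' u' = 0 := SimpleGraph.dist_self (G := G)
    omega
  refine ⟨u', v', hne', ⟨hu'max', hv'max⟩, ?_, ?_⟩
  · -- u' strongly resolves u v : d(u',v) = d(u',u) + d(u,v)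
    refine stronglyResolves_of_dist hG (Or.inr ?_)
    have hc2 : G.dist u' u = G.dist u u' := SimpleGraph.dist_comm (G := G) (u := u') (v := u)
    have hc3 : G.dist u v = G.dist v u := SimpleGraph.dist_comm (G := G) (u := u) (v := v)
    omega
  · -- v' strongly resolves u v : d(v',u) = d(v',v) + d(v,u)
    refine stronglyResolves_of_dist hG (Or.inl ?_)
    have t1 : G.dist u' v' ≤ G.dist u' u + G.dist u v' := hG.dist_triangle
    have t2 : G.dist u v' ≤ G.dist u v + G.dist v v' := hG.dist_triangle
    have hc2 : G.dist u' u = G.dist u u' := SimpleGraph.dist_comm (G := G) (u := u') (v := u)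
    have hc3 : G.dist v' u = G.dist u v' := SimpleGraph.dist_comm (G := G) (u := v') (v := u)
    have hc4 : G.dist v' v = G.dist v v' := SimpleGraph.dist_comm (G := G) (u := v') (v := v)
    have hc5 : G.dist u v = G.dist v u := SimpleGraph.dist_comm (G := G) (u := u) (v := v)
    omega

/-- If `v` is maximally distant from `u` and `w` strongly resolves with
`d(w,u) = d(w,v) + d(v,u)`, `u ≠ v`, then `w = v`. -/
lemma eq_of_maxDistant_resolves (hG : G.Connected) {w u v : α}
    (hmd : MaxDistant G v u) (hne : u ≠ v)
    (heq : G.dist w u = G.dist w v + G.dist v u) : w = v := by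
  by_contra hwv
  have hpos : 0 < G.dist v w := hG.pos_dist_of_ne (Ne.symm hwv)
  obtain ⟨p, hp⟩ := hG.exists_walk_length_eq_dist v w
  cases p with
  | nil => simp at hp; omega
  | @cons _ v₁ _ hadj q =>
    rw [maxDistant_iff hG] at hmd
    have h1 : G.dist u v₁ ≤ G.dist v u := hmd v₁ hadj
    have h2 : G.dist v₁ w ≤ q.length := dist_le q
    have h3 : q.length + 1 = G.dist v w := by
      simpa [Walk.length_cons] using hp
    have h4 : G.dist u w ≤ G.dist u v₁ + G.dist v₁ w := hG.dist_triangle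
    have hc1 : G.dist w u = G.dist u w := SimpleGraph.dist_comm (G := G) (u := w) (v := u)
    have hc2 : G.dist w v = G.dist v w := SimpleGraph.dist_comm (G := G) (u := w) (v := v)
    have hpos2 : 0 < G.dist v u := hG.pos_dist_of_ne (Ne.symm hne)
    omega

/-- Any strong resolver of an MMD pair must be one of the two vertices. -/
lemma resolver_mem_of_mmd (hG : G.Connected) {w u v : α}
    (hmmd : MMD G u v) (hne : u ≠ v) (hres : StronglyResolves G w u v) :
    w = u ∨ w = v := by
  rcases stronglyResolves_dist hG hres with h | h
  · exact Or.inr (eq_of_maxDistant_resolves hG hmmd.2 hne h)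
  · exact Or.inl (eq_of_maxDistant_resolves hG hmmd.1 (Ne.symm hne) h)

end Aux

theorem stmt_9 [Fintype α] (G : SimpleGraph α) (hG : G.Connected) :
    sdim G = vcNum (srGraph G) := by
  classical
  haveI : Fintype ↥(boundary G) := Fintype.ofFinite _
  -- nonemptiness of the two defining sets
  have hgen_ne : {k | ∃ S : Finset α, IsStrongGenerator G S ∧ S.card = k}.Nonempty := by
    refine ⟨(Finset.univ : Finset α).card, Finset.univ, ?_, rfl⟩
    intro u v huv
    exact ⟨u, Finset.mem_univ u, Or.inr (by simp [edist_self])⟩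
  have hvc_ne : {k | ∃ S : Finset ↥(boundary G),
      IsVertexCover (srGraph G) S ∧ S.card = k}.Nonempty := by
    exact ⟨(Finset.univ : Finset ↥(boundary G)).card, Finset.univ,
      fun u v _ => Or.inl (Finset.mem_univ u), rfl⟩
  apply le_antisymm
  · -- sdim ≤ vcNum : a vertex cover of srGraph yields a strong generator
    obtain ⟨T, hTcov, hTcard⟩ := Nat.sInf_mem hvc_ne
    set S : Finset α := T.image Subtype.val with hSdef
    have hSgen : IsStrongGenerator G S := by
      intro u v huv
      obtain ⟨u', v', hne', hmmd, hres1, hres2⟩ := exists_mmd_resolver hG huv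
      have hu'b : u' ∈ boundary G := ⟨v', hne', hmmd⟩
      have hv'b : v' ∈ boundary G := ⟨u', Ne.symm hne', hmmd.2, hmmd.1⟩
      have hadj : (srGraph G).Adj ⟨u', hu'b⟩ ⟨v', hv'b⟩ := ⟨hne', hmmd⟩
      rcases hTcov hadj with h | h
      · exact ⟨u', Finset.mem_image.mpr ⟨⟨u', hu'b⟩, h, rfl⟩, hres1⟩
      · exact ⟨v', Finset.mem_image.mpr ⟨⟨v', hv'b⟩, h, rfl⟩, hres2⟩
    calc sdim G ≤ S.card := Nat.sInf_le ⟨S, hSgen, rfl⟩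
      _ ≤ T.card := Finset.card_image_le
      _ = vcNum (srGraph G) := hTcard
  · -- vcNum ≤ sdim : a strong generator yields a vertex cover of srGraph
    obtain ⟨S, hSgen, hScard⟩ := Nat.sInf_mem hgen_ne
    set T : Finset ↥(boundary G) := Finset.univ.filter (fun x => x.1 ∈ S) with hTdef
    have hTcov : IsVertexCover (srGraph G) T := by
      rintro ⟨u, hu⟩ ⟨v, hv⟩ ⟨hne, hmmd⟩
      obtain ⟨w, hwS, hwres⟩ := hSgen u v hne
      rcases resolver_mem_of_mmd hG hmmd hne hwres with h | h
      · subst h; exact Or.inl (by simp [hTdef, hwS])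
      · subst h; exact Or.inr (by simp [hTdef, hwS])
    have hcard : T.card ≤ S.card := by
      apply Finset.card_le_card_of_injOn Subtype.val
      · intro x hx
        simpa [hTdef] using hx
      · exact Set.injOn_of_injective Subtype.val_injective
    calc vcNum (srGraph G) ≤ T.card := Nat.sInf_le ⟨T, hTcov, rfl⟩
      _ ≤ S.card := hcard
      _ = sdim G := hScard

end Paper
end

section
/- For any integers n, n' ≥ 2, dim_s(K_n ∘ N_{n'}) = n(n'−1), where N_{n'} is the empty graph on n' vertices; equivalently, the strong metric dimension of the complete n-partite graph with all parts of size n' is n(n'−1). -/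
open SimpleGraph

namespace Paper

variable {α β : Type*}

variable {n n' : ℕ}

lemma KN_adj (p q : Fin n × Fin n') :
    (lexProd (⊤ : SimpleGraph (Fin n)) (⊥ : SimpleGraph (Fin n'))).Adj p q ↔ p.1 ≠ q.1 := by
  simp [lexProd]

lemma KN_edist_le_two (hn : 2 ≤ n) (p q : Fin n × Fin n') :
    (lexProd (⊤ : SimpleGraph (Fin n)) (⊥ : SimpleGraph (Fin n'))).edist p q ≤ 2 := by
  set G := lexProd (⊤ : SimpleGraph (Fin n)) (⊥ : SimpleGraph (Fin n'))
  by_cases h : p.1 = q.1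
  · by_cases hpq : p = q
    · simp [hpq, edist_self]
    · have hnpos : 0 < n := by omega
      haveI : Nontrivial (Fin n) := Fin.nontrivial_iff_two_le.mpr hn
      obtain ⟨c, hcne⟩ := exists_ne p.1
      have h1 : G.Adj p (c, p.2) := (KN_adj _ _).mpr (Ne.symm hcne)
      have h2 : G.Adj (c, p.2) q := (KN_adj _ _).mpr (by simpa [← h] using hcne)
      have := SimpleGraph.edist_le (Walk.cons h1 (Walk.cons h2 Walk.nil))
      simpa using this
  · calc G.edist p q ≤ 1 := le_of_eq (edist_eq_one_iff_adj.mpr ((KN_adj _ _).mpr h))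
      _ ≤ 2 := by norm_num

lemma KN_edist_eq_two (hn : 2 ≤ n) {p q : Fin n × Fin n'} (hne : p ≠ q) (h : p.1 = q.1) :
    (lexProd (⊤ : SimpleGraph (Fin n)) (⊥ : SimpleGraph (Fin n'))).edist p q = 2 := by
  set G := lexProd (⊤ : SimpleGraph (Fin n)) (⊥ : SimpleGraph (Fin n'))
  refine le_antisymm (KN_edist_le_two hn p q) ?_
  have h0 : G.edist p q ≠ 0 := fun hc => hne (edist_eq_zero_iff.mp hc)
  have h1 : G.edist p q ≠ 1 := by
    intro hc
    have := (edist_eq_one_iff_adj).mp hc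
    rw [KN_adj] at this
    exact this h
  have hlt : 1 < G.edist p q :=
    lt_of_le_of_ne (Order.one_le_iff_pos.mpr (pos_iff_ne_zero.mpr h0)) (Ne.symm h1)
  have := ENat.add_one_le_iff (m := 1) (n := G.edist p q) (by norm_num) |>.mpr hlt
  simpa [one_add_one_eq_two] using this

lemma KN_resolve_same_part (hn : 2 ≤ n) {u v w : Fin n × Fin n'} (hne : u ≠ v)
    (h : u.1 = v.1)
    (hr : StronglyResolves (lexProd (⊤ : SimpleGraph (Fin n)) (⊥ : SimpleGraph (Fin n'))) w u v) :
    w = u ∨ w = v := by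
  set G := lexProd (⊤ : SimpleGraph (Fin n)) (⊥ : SimpleGraph (Fin n'))
  have huv : G.edist u v = 2 := KN_edist_eq_two hn hne h
  have hvu : G.edist v u = 2 := KN_edist_eq_two hn (Ne.symm hne) h.symm
  rcases hr with hr | hr
  · right
    rw [hvu] at hr
    have hle : G.edist w v + 2 ≤ 0 + 2 := by
      rw [zero_add, ← hr]; exact KN_edist_le_two hn w u
    have h0 : G.edist w v ≤ 0 :=
      (WithTop.add_le_add_iff_right (by norm_num : (2 : ℕ∞) ≠ ⊤)).mp hle
    exact edist_eq_zero_iff.mp (le_antisymm h0 zero_le)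
  · left
    rw [huv] at hr
    have hle : G.edist w u + 2 ≤ 0 + 2 := by
      rw [zero_add, ← hr]; exact KN_edist_le_two hn w v
    have h0 : G.edist w u ≤ 0 :=
      (WithTop.add_le_add_iff_right (by norm_num : (2 : ℕ∞) ≠ ⊤)).mp hle
    exact edist_eq_zero_iff.mp (le_antisymm h0 zero_le)

theorem stmt_19 (n n' : ℕ) (hn : 2 ≤ n) (hn' : 2 ≤ n') :
    sdim (lexProd (⊤ : SimpleGraph (Fin n)) (⊥ : SimpleGraph (Fin n'))) =
      n * (n' - 1) := by
  set G := lexProd (⊤ : SimpleGraph (Fin n)) (⊥ : SimpleGraph (Fin n')) with hG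
  set z : Fin n' := ⟨0, by omega⟩ with hz
  set S : Finset (Fin n × Fin n') := Finset.univ ×ˢ (Finset.univ.erase z) with hS
  have hmem : ∀ p : Fin n × Fin n', p ∈ S ↔ p.2 ≠ z := by
    intro p; simp [hS]
  have hcard : S.card = n * (n' - 1) := by
    simp [hS, Finset.card_erase_of_mem]
  have hgen : IsStrongGenerator G S := by
    intro u v huv
    by_cases hu : u.2 ≠ z
    · exact ⟨u, (hmem u).mpr hu, Or.inr (by simp [StronglyResolves, edist_self])⟩
    · by_cases hv : v.2 ≠ z
      · exact ⟨v, (hmem v).mpr hv, Or.inl (by simp [StronglyResolves, edist_self])⟩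
      · push_neg at hu hv
        have hfst : u.1 ≠ v.1 := by
          intro h; exact huv (Prod.ext h (hu.trans hv.symm))
        refine ⟨(u.1, ⟨1, by omega⟩), ?_, Or.inl ?_⟩
        · rw [hmem]
          intro h
          have : (1 : ℕ) = 0 := congrArg Fin.val h
          omega
        · have h1 : G.edist (u.1, (⟨1, by omega⟩ : Fin n')) u = 2 := by
            refine KN_edist_eq_two hn ?_ rfl
            intro h
            have : (1 : ℕ) = 0 := by simpa [hu] using congrArg (Fin.val ∘ Prod.snd) h
            omega
          have h2 : G.edist (u.1, (⟨1, by omega⟩ : Fin n')) v = 1 :=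
            edist_eq_one_iff_adj.mpr ((KN_adj _ _).mpr hfst)
          have h3 : G.edist v u = 1 :=
            edist_eq_one_iff_adj.mpr ((KN_adj _ _).mpr (Ne.symm hfst))
          rw [h1, h2, h3]; rfl
  refine le_antisymm (Nat.sInf_le ⟨S, hgen, hcard⟩) ?_
  obtain ⟨T, hT, hTc⟩ := Nat.sInf_mem (⟨_, S, hgen, hcard⟩ :
    {k | ∃ S : Finset (Fin n × Fin n'), IsStrongGenerator G S ∧ S.card = k}.Nonempty)
  rw [sdim, ← hTc]
  set C : Finset (Fin n × Fin n') := Finset.univ \ T with hC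
  have hfiber : ∀ a : Fin n, (C.filter (fun p => p.1 = a)).card ≤ 1 := by
    intro a
    rw [Finset.card_le_one]
    intro x hx y hy
    by_contra hxy
    simp only [Finset.mem_filter, hC, Finset.mem_sdiff] at hx hy
    obtain ⟨w, hwT, hw⟩ := hT x y hxy
    rcases KN_resolve_same_part hn hxy (hx.2.trans hy.2.symm) hw with rfl | rfl
    · exact hx.1.2 hwT
    · exact hy.1.2 hwT
  have hCcard : C.card ≤ n := by
    rw [Finset.card_eq_sum_card_fiberwise (f := fun p => p.1) (t := Finset.univ)
      (fun x _ => Finset.mem_univ _)]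
    calc ∑ a : Fin n, (C.filter (fun p => p.1 = a)).card ≤ ∑ _a : Fin n, 1 :=
          Finset.sum_le_sum fun a _ => hfiber a
      _ = n := by simp
  have hCT : C.card = n * n' - T.card := by
    rw [hC, Finset.card_sdiff_of_subset (Finset.subset_univ T)]
    simp
  have hTle : T.card ≤ n * n' := by
    calc T.card ≤ (Finset.univ : Finset (Fin n × Fin n')).card :=
          Finset.card_le_card (Finset.subset_univ T)
      _ = n * n' := by simp
  have key : n * (n' - 1) + n = n * n' := by
    have h1 : n' - 1 + 1 = n' := Nat.succ_pred_eq_of_pos (lt_of_lt_of_le two_pos hn')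
    calc n * (n' - 1) + n = n * ((n' - 1) + 1) := by ring
      _ = n * n' := by rw [h1]
  have h5 : n * n' ≤ T.card + n := by
    rw [hCT] at hCcard
    have h6 := Nat.sub_le_iff_le_add.mp hCcard
    rwa [Nat.add_comm] at h6
  rw [← key] at h5
  exact Nat.le_of_add_le_add_right h5

end Paper
end
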